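/- The number of 123-avoiding permutations of length n with exactly k left-to-right minima equals the number of 132-avoiding permutations of length n with exactly k left-to-right minima. -/
import Mathlib

/-- `π i` is a left-to-right minimum of `π`. -/
def IsLRMin {n : ℕ} (π : Equiv.Perm (Fin n)) (i : Fin n) : Prop :=
  ∀ j, j < i → π i < π j

/-- `π` avoids the pattern 132. -/
def Avoids132 {n : ℕ} (π : Equiv.Perm (Fin n)) : Prop :=
  ¬ ∃ i j k : Fin n, i < j ∧ j < k ∧ π i < π k ∧ π k < π j

/-- `π` avoids the pattern 123. -/
def Avoids123 {n : ℕ} (π : Equiv.Perm (Fin n)) : Prop :=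
  ¬ ∃ i j k : Fin n, i < j ∧ j < k ∧ π i < π j ∧ π j < π k

namespace SS

open Equiv Finset

variable {n : ℕ}

open Classical in
/-- The left-to-right-minima data of a permutation. -/
noncomputable def minData (π : Equiv.Perm (Fin n)) : Fin n → Option (Fin n) :=
  fun i => if IsLRMin π i then some (π i) else none

open Classical in
lemma minData_some {π : Equiv.Perm (Fin n)} {i : Fin n} (h : IsLRMin π i) :
    minData π i = some (π i) := if_pos h

open Classical in
lemma minData_none {π : Equiv.Perm (Fin n)} {i : Fin n} (h : ¬ IsLRMin π i) :
    minData π i = none := if_neg h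

lemma isLRMin_iff_of_eq {σ π : Equiv.Perm (Fin n)} (h : minData σ = minData π) (i : Fin n) :
    IsLRMin σ i ↔ IsLRMin π i := by
  have := congrFun h i
  by_cases h1 : IsLRMin σ i <;> by_cases h2 : IsLRMin π i <;>
    simp [minData_some, minData_none, h1, h2] at this ⊢

lemma apply_eq_of_minData {σ π : Equiv.Perm (Fin n)} (h : minData σ = minData π) {i : Fin n}
    (hi : IsLRMin σ i) : σ i = π i := by
  have := congrFun h i
  rw [minData_some hi, minData_some ((isLRMin_iff_of_eq h i).1 hi)] at this
  exact Option.some_injective _ this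

lemma exists_lt_of_not_min {σ : Equiv.Perm (Fin n)} {i : Fin n} (h : ¬ IsLRMin σ i) :
    ∃ p, p < i ∧ σ p < σ i := by
  unfold IsLRMin at h
  push_neg at h
  obtain ⟨p, hp, hle⟩ := h
  refine ⟨p, hp, lt_of_le_of_ne hle ?_⟩
  intro he
  exact absurd (σ.injective he) (ne_of_lt hp)

/-- A 123-avoiding permutation is determined by its minima data. -/
lemma rigid123 {σ π : Equiv.Perm (Fin n)} (hσ : Avoids123 σ) (hπ : Avoids123 π)
    (h : minData σ = minData π) : σ = π := by
  have key : ∀ N : ℕ, ∀ i : Fin n, (i : ℕ) < N → σ i = π i := by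
    intro N
    induction N with
    | zero => intro i hi; omega
    | succ N IH =>
      intro i hi
      have ih : ∀ j : Fin n, j < i → σ j = π j := fun j hj =>
        IH j (lt_of_lt_of_le (Fin.lt_def.mp hj) (Nat.lt_succ_iff.mp hi))
      by_cases hmin : IsLRMin σ i
      · exact apply_eq_of_minData h hmin
      · obtain ⟨p, hpi, hp⟩ := exists_lt_of_not_min hmin
        have hmin' : ¬ IsLRMin π i := fun hh => hmin ((isLRMin_iff_of_eq h i).2 hh)
        obtain ⟨q, hqi, hq⟩ := exists_lt_of_not_min hmin'
        by_contra hne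
        rcases lt_or_gt_of_ne hne with hlt | hlt
        · -- σ i < π i ; find m with σ m = π i, m > i, get 123 pattern in σ
          set m := σ.symm (π i) with hm
          have hσm : σ m = π i := σ.apply_symm_apply _
          have him : i < m := by
            rcases lt_trichotomy m i with h' | h' | h'
            · exfalso
              have := ih m h'
              rw [this] at hσm
              exact absurd (π.injective hσm) (ne_of_lt h')
            · exfalso; rw [h'] at hσm; exact absurd hσm (ne_of_lt hlt)
            · exact h'
          exact hσ ⟨p, i, m, hpi, him, hp, by rw [hσm]; exact hlt⟩
        · set m := π.symm (σ i) with hm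
          have hπm : π m = σ i := π.apply_symm_apply _
          have him : i < m := by
            rcases lt_trichotomy m i with h' | h' | h'
            · exfalso
              have := ih m h'
              rw [← this] at hπm
              exact absurd (σ.injective hπm) (ne_of_lt h')
            · exfalso; rw [h'] at hπm; exact absurd hπm (ne_of_lt hlt)
            · exact h'
          exact hπ ⟨q, i, m, hqi, him, hq, by rw [hπm]; exact hlt⟩
  exact Equiv.ext fun i => key ((i : ℕ) + 1) i (Nat.lt_succ_self _)

/-- A 132-avoiding permutation is determined by its minima data. -/
lemma rigid132 {σ π : Equiv.Perm (Fin n)} (hσ : Avoids132 σ) (hπ : Avoids132 π)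
    (h : minData σ = minData π) : σ = π := by
  have key : ∀ N : ℕ, ∀ i : Fin n, (i : ℕ) < N → σ i = π i := by
    intro N
    induction N with
    | zero => intro i hi; omega
    | succ N IH =>
      intro i hi
      have ih : ∀ j : Fin n, j < i → σ j = π j := fun j hj =>
        IH j (lt_of_lt_of_le (Fin.lt_def.mp hj) (Nat.lt_succ_iff.mp hi))
      by_cases hmin : IsLRMin σ i
      · exact apply_eq_of_minData h hmin
      · obtain ⟨p, hpi, hp⟩ := exists_lt_of_not_min hmin
        have hmin' : ¬ IsLRMin π i := fun hh => hmin ((isLRMin_iff_of_eq h i).2 hh)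
        obtain ⟨q, hqi, hq⟩ := exists_lt_of_not_min hmin'
        by_contra hne
        rcases lt_or_gt_of_ne hne with hlt | hlt
        · -- σ i < π i ; m := π.symm (σ i) > i ; pattern (p, i, m) in π
          set m := π.symm (σ i) with hm
          have hπm : π m = σ i := π.apply_symm_apply _
          have him : i < m := by
            rcases lt_trichotomy m i with h' | h' | h'
            · exfalso
              have := ih m h'
              rw [← this] at hπm
              exact absurd (σ.injective hπm) (ne_of_lt h')
            · exfalso; rw [h'] at hπm; exact absurd hπm (ne_of_gt hlt)
            · exact h'
          refine hπ ⟨p, i, m, hpi, him, ?_, by rw [hπm]; exact hlt⟩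
          rw [hπm, ← ih p hpi]; exact hp
        · set m := σ.symm (π i) with hm
          have hσm : σ m = π i := σ.apply_symm_apply _
          have him : i < m := by
            rcases lt_trichotomy m i with h' | h' | h'
            · exfalso
              have := ih m h'
              rw [this] at hσm
              exact absurd (π.injective hσm) (ne_of_lt h')
            · exfalso; rw [h'] at hσm; exact absurd hσm (ne_of_gt hlt)
            · exact h'
          refine hσ ⟨q, i, m, hqi, him, ?_, by rw [hσm]; exact hlt⟩
          rw [hσm, ih q hqi]; exact hq
  exact Equiv.ext fun i => key ((i : ℕ) + 1) i (Nat.lt_succ_self _)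

/-- Swapping the two larger entries of a pattern (with the smallest entry first)
preserves the minima data. -/
lemma swap_minData (σ : Equiv.Perm (Fin n)) {i j k : Fin n} (hij : i < j) (hjk : j < k)
    (h1 : σ i < σ j) (h2 : σ i < σ k) :
    minData (σ * Equiv.swap j k) = minData σ := by
  set τ := σ * Equiv.swap j k with hτdef
  have hτj : τ j = σ k := by simp [hτdef, Equiv.Perm.mul_apply]
  have hτk : τ k = σ j := by simp [hτdef, Equiv.Perm.mul_apply]
  have hτo : ∀ m : Fin n, m ≠ j → m ≠ k → τ m = σ m := by
    intro m h1 h2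
    simp [hτdef, Equiv.Perm.mul_apply, Equiv.swap_apply_of_ne_of_ne h1 h2]
  have hik : i < k := hij.trans hjk
  have hinej : i ≠ j := ne_of_lt hij
  have hinek : i ≠ k := ne_of_lt hik
  have hτi : τ i = σ i := hτo i hinej hinek
  have A : ∀ m : Fin n, IsLRMin τ m ↔ IsLRMin σ m := by
    intro m
    by_cases hmj : m = j
    · subst hmj
      constructor
      · intro hh
        exact absurd (hh i hij) (not_lt.2 (le_of_lt (by rw [hτi, hτj]; exact h2)))
      · intro hh
        exact absurd (hh i hij) (not_lt.2 (le_of_lt h1))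
    · by_cases hmk : m = k
      · subst hmk
        constructor
        · intro hh
          exact absurd (hh i hik) (not_lt.2 (le_of_lt (by rw [hτi, hτk]; exact h1)))
        · intro hh
          exact absurd (hh i hik) (not_lt.2 (le_of_lt h2))
      · have hτm : τ m = σ m := hτo m hmj hmk
        rcases lt_trichotomy m j with hmlt | he | hmgt
        · -- m < j : everything below m is unchanged
          constructor
          · intro hh l hl
            have := hh l hl
            rwa [hτm, hτo l (ne_of_lt (hl.trans hmlt)) (ne_of_lt ((hl.trans hmlt).trans hjk))] at this
          · intro hh l hl
            rw [hτm, hτo l (ne_of_lt (hl.trans hmlt)) (ne_of_lt ((hl.trans hmlt).trans hjk))]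
            exact hh l hl
        · exact absurd he hmj
        · rcases lt_trichotomy m k with hmk' | he | hmgt'
          · -- j < m < k
            constructor
            · intro hh l hl
              by_cases hlj : l = j
              · subst hlj
                have him : i < m := hij.trans hmgt
                have : τ m < τ i := hh i him
                rw [hτm, hτi] at this
                exact this.trans h1
              · have hlk : l ≠ k := ne_of_lt (hl.trans hmk')
                have := hh l hl
                rwa [hτm, hτo l hlj hlk] at this
            · intro hh l hl
              by_cases hlj : l = j
              · subst hlj
                rw [hτm, hτj]
                exact (hh i (hij.trans hmgt)).trans h2
              · have hlk : l ≠ k := ne_of_lt (hl.trans hmk')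
                rw [hτm, hτo l hlj hlk]
                exact hh l hl
          · exact absurd he hmk
          · -- k < m : the previous values are the same set
            constructor
            · intro hh l hl
              by_cases hlj : l = j
              · subst hlj
                have := hh k hmgt'
                rwa [hτm, hτk] at this
              · by_cases hlk : l = k
                · subst hlk
                  have := hh j (hjk.trans hmgt')
                  rwa [hτm, hτj] at this
                · have := hh l hl
                  rwa [hτm, hτo l hlj hlk] at this
            · intro hh l hl
              by_cases hlj : l = j
              · subst hlj
                rw [hτm, hτj]
                exact hh k hmgt'
              · by_cases hlk : l = k
                · subst hlk
                  rw [hτm, hτk]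
                  exact hh j (hjk.trans hmgt')
                · rw [hτm, hτo l hlj hlk]
                  exact hh l hl
  have B : ∀ m : Fin n, IsLRMin σ m → τ m = σ m := by
    intro m hm
    have hmj : m ≠ j := by
      intro he; subst he
      exact absurd (hm i hij) (not_lt.2 (le_of_lt h1))
    have hmk : m ≠ k := by
      intro he; subst he
      exact absurd (hm i hik) (not_lt.2 (le_of_lt h2))
    exact hτo m hmj hmk
  funext m
  by_cases hm : IsLRMin σ m
  · rw [minData_some hm, minData_some ((A m).2 hm), B m hm]
  · rw [minData_none hm, minData_none (fun hh => hm ((A m).1 hh))]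

/-- The statistic `∑ i, i * σ i`. -/
def stat (σ : Equiv.Perm (Fin n)) : ℕ := ∑ m : Fin n, (m : ℕ) * (σ m : ℕ)

lemma stat_swap (σ : Equiv.Perm (Fin n)) {j k : Fin n} (hjk : j < k) :
    stat (σ * Equiv.swap j k) + (j : ℕ) * (σ j : ℕ) + (k : ℕ) * (σ k : ℕ)
      = stat σ + (j : ℕ) * (σ k : ℕ) + (k : ℕ) * (σ j : ℕ) := by
  classical
  have hne : j ≠ k := ne_of_lt hjk
  set τ := σ * Equiv.swap j k with hτdef
  have hτj : τ j = σ k := by simp [hτdef, Equiv.Perm.mul_apply]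
  have hτk : τ k = σ j := by simp [hτdef, Equiv.Perm.mul_apply]
  have hτo : ∀ m : Fin n, m ≠ j → m ≠ k → τ m = σ m := by
    intro m h1 h2
    simp [hτdef, Equiv.Perm.mul_apply, Equiv.swap_apply_of_ne_of_ne h1 h2]
  have split : ∀ g : Fin n → ℕ,
      ∑ m : Fin n, g m = g j + (g k + ∑ m ∈ (Finset.univ.erase j).erase k, g m) := by
    intro g
    rw [← Finset.add_sum_erase _ g (Finset.mem_univ j),
        ← Finset.add_sum_erase _ g (Finset.mem_erase.2 ⟨hne.symm, Finset.mem_univ k⟩)]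
  have hrest : ∑ m ∈ (Finset.univ.erase j).erase k, (m : ℕ) * (τ m : ℕ)
      = ∑ m ∈ (Finset.univ.erase j).erase k, (m : ℕ) * (σ m : ℕ) := by
    apply Finset.sum_congr rfl
    intro m hm
    rw [Finset.mem_erase] at hm
    have hm' := hm.2
    rw [Finset.mem_erase] at hm'
    rw [hτo m hm'.1 hm.1]
  have e1 : stat τ = (j : ℕ) * (σ k : ℕ) + ((k : ℕ) * (σ j : ℕ)
      + ∑ m ∈ (Finset.univ.erase j).erase k, (m : ℕ) * (σ m : ℕ)) := by
    rw [stat, split (fun m => (m : ℕ) * (τ m : ℕ)), hτj, hτk, hrest]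
  have e2 : stat σ = (j : ℕ) * (σ j : ℕ) + ((k : ℕ) * (σ k : ℕ)
      + ∑ m ∈ (Finset.univ.erase j).erase k, (m : ℕ) * (σ m : ℕ)) := by
    rw [stat, split (fun m => (m : ℕ) * (σ m : ℕ))]
  rw [e1, e2]; ring

lemma mul_ineq {a b c d : ℕ} (hab : a < b) (hdc : d < c) : a * c + b * d < a * d + b * c := by
  obtain ⟨s, rfl⟩ : ∃ s, b = a + s + 1 := ⟨b - a - 1, by omega⟩
  obtain ⟨t, rfl⟩ : ∃ t, c = d + t + 1 := ⟨c - d - 1, by omega⟩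
  ring_nf
  nlinarith [Nat.zero_le (s * t)]

/-- Every minima-data fiber contains a 132-avoiding permutation. -/
lemma exists132 (π : Equiv.Perm (Fin n)) :
    ∃ σ : Equiv.Perm (Fin n), Avoids132 σ ∧ minData σ = minData π := by
  classical
  obtain ⟨σ, hσS, hmax⟩ := Finset.exists_max_image
    (Finset.univ.filter fun σ : Equiv.Perm (Fin n) => minData σ = minData π) stat
    ⟨π, by simp⟩
  have hσ : minData σ = minData π := (Finset.mem_filter.1 hσS).2
  refine ⟨σ, ?_, hσ⟩
  rintro ⟨i, j, k, hij, hjk, h1, h2⟩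
  -- h1 : σ i < σ k, h2 : σ k < σ j
  have hD := swap_minData σ hij hjk (h1.trans h2) h1
  have hmem : σ * Equiv.swap j k ∈
      Finset.univ.filter fun σ : Equiv.Perm (Fin n) => minData σ = minData π :=
    Finset.mem_filter.2 ⟨Finset.mem_univ _, hD.trans hσ⟩
  have hle := hmax _ hmem
  have hs := stat_swap σ hjk
  have hm := mul_ineq (show (j : ℕ) < (k : ℕ) from hjk) (show (σ k : ℕ) < (σ j : ℕ) from h2)
  linarith

/-- Every minima-data fiber contains a 123-avoiding permutation. -/
lemma exists123 (π : Equiv.Perm (Fin n)) :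
    ∃ σ : Equiv.Perm (Fin n), Avoids123 σ ∧ minData σ = minData π := by
  classical
  obtain ⟨σ, hσS, hmin⟩ := Finset.exists_min_image
    (Finset.univ.filter fun σ : Equiv.Perm (Fin n) => minData σ = minData π) stat
    ⟨π, by simp⟩
  have hσ : minData σ = minData π := (Finset.mem_filter.1 hσS).2
  refine ⟨σ, ?_, hσ⟩
  rintro ⟨i, j, k, hij, hjk, h1, h2⟩
  -- h1 : σ i < σ j, h2 : σ j < σ k
  have hD := swap_minData σ hij hjk h1 (h1.trans h2)
  have hmem : σ * Equiv.swap j k ∈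
      Finset.univ.filter fun σ : Equiv.Perm (Fin n) => minData σ = minData π :=
    Finset.mem_filter.2 ⟨Finset.mem_univ _, hD.trans hσ⟩
  have hle := hmin _ hmem
  have hs := stat_swap σ hjk
  have hm := mul_ineq (show (j : ℕ) < (k : ℕ) from hjk) (show (σ j : ℕ) < (σ k : ℕ) from h2)
  linarith

lemma card_min_eq {σ π : Equiv.Perm (Fin n)} (h : minData σ = minData π) :
    Nat.card {i : Fin n // IsLRMin σ i} = Nat.card {i : Fin n // IsLRMin π i} :=
  Nat.card_congr (Equiv.subtypeEquivRight (isLRMin_iff_of_eq h))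

end SS

/-- The number of 123-avoiding permutations of length `n` with exactly `k`
left-to-right minima equals the number of 132-avoiding permutations of
length `n` with exactly `k` left-to-right minima. -/
theorem count_123_eq_count_132 (n k : ℕ) :
    Nat.card {π : Equiv.Perm (Fin n) //
        Avoids123 π ∧ Nat.card {i : Fin n // IsLRMin π i} = k} =
    Nat.card {π : Equiv.Perm (Fin n) //
        Avoids132 π ∧ Nat.card {i : Fin n // IsLRMin π i} = k} := by
  classical
  apply Nat.card_congr
  refine Equiv.ofBijective
    (fun σ => ⟨Classical.choose (SS.exists132 σ.1),
      (Classical.choose_spec (SS.exists132 σ.1)).1, by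
        rw [SS.card_min_eq (Classical.choose_spec (SS.exists132 σ.1)).2]
        exact σ.2.2⟩) ⟨?_, ?_⟩
  · intro σ σ' hh
    have h1 := (Classical.choose_spec (SS.exists132 σ.1)).2
    have h2 := (Classical.choose_spec (SS.exists132 σ'.1)).2
    have he : Classical.choose (SS.exists132 σ.1) = Classical.choose (SS.exists132 σ'.1) :=
      congrArg Subtype.val hh
    apply Subtype.ext
    exact SS.rigid123 σ.2.1 σ'.2.1 (by rw [← h1, he, h2])
  · intro τ
    obtain ⟨σ0, hσ0⟩ : ∃ σ0 : Equiv.Perm (Fin n), Avoids123 σ0 ∧ SS.minData σ0 = SS.minData τ.1 :=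
      SS.exists123 τ.1
    refine ⟨⟨σ0, hσ0.1, by rw [SS.card_min_eq hσ0.2]; exact τ.2.2⟩, ?_⟩
    apply Subtype.ext
    have hspec := Classical.choose_spec (SS.exists132 σ0)
    exact SS.rigid132 hspec.1 τ.2.1 (by rw [hspec.2, hσ0.2])
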